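/- Let (A,B,C) be an LR triple on V. Then the ten maps I, A, B, C, ABC, BCA, CAB, ACB, CBA, BAC (products denote composition) all belong to the tridiagonal space 𝒳 of (A,B,C). -/

import Mathlib

/-- A decomposition of `V` of diameter `d`: a sequence of one-dimensional subspaces
`sub 0, …, sub d` whose (direct) sum is `V`; by convention `sub i = ⊥` for `i > d`
(encoding `V_{-1} = 0` and `V_{d+1} = 0`). -/
structure LRDecomp (F : Type*) [Field F] (V : Type*) [AddCommGroup V] [Module F V]
    (d : ℕ) where
  sub : ℕ → Submodule F V
  finrank_eq_one : ∀ i ≤ d, Module.finrank F (sub i) = 1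
  eq_bot_of_gt : ∀ i, d < i → sub i = ⊥
  isInternal : DirectSum.IsInternal fun i : Fin (d + 1) => sub i.val

variable {F : Type*} [Field F] {V : Type*} [AddCommGroup V] [Module F V]

/-- `A` lowers the decomposition: `A V_i = V_{i-1}` for `0 ≤ i ≤ d` (with `V_{-1} = 0`). -/
def Lowers {d : ℕ} (A : Module.End F V) (D : LRDecomp F V d) : Prop :=
  Submodule.map A (D.sub 0) = ⊥ ∧ ∀ i < d, Submodule.map A (D.sub (i + 1)) = D.sub i

/-- `B` raises the decomposition: `B V_i = V_{i+1}` for `0 ≤ i ≤ d` (with `V_{d+1} = 0`). -/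
def Raises {d : ℕ} (B : Module.End F V) (D : LRDecomp F V d) : Prop :=
  ∀ i ≤ d, Submodule.map B (D.sub i) = D.sub (i + 1)

/-- `D` is the (A,B)-decomposition: it is lowered by `A` and raised by `B`. -/
def IsLRPairWith {d : ℕ} (A B : Module.End F V) (D : LRDecomp F V d) : Prop :=
  Lowers A D ∧ Raises B D

/-- `(A,B,C)` is an LR triple of diameter `d`. -/
def IsLRTriple (d : ℕ) (A B C : Module.End F V) : Prop :=
  (∃ D : LRDecomp F V d, IsLRPairWith A B D) ∧
  (∃ D : LRDecomp F V d, IsLRPairWith B C D) ∧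
  (∃ D : LRDecomp F V d, IsLRPairWith C A D)

/-- `X` is tridiagonal with respect to the decomposition `D`:
`X V_i ⊆ V_{i-1} + V_i + V_{i+1}` (note `V_{0-1} ⊔ V_0 = V_0` makes `ℕ`-subtraction correct). -/
def IsTridiagonal {d : ℕ} (X : Module.End F V) (D : LRDecomp F V d) : Prop :=
  ∀ i, ∀ v ∈ D.sub i, X v ∈ D.sub (i - 1) ⊔ D.sub i ⊔ D.sub (i + 1)

/-- The tridiagonal space of the LR triple with decompositions `D₁, D₂, D₃`. -/
def tridiagSpace {d : ℕ} (D₁ D₂ D₃ : LRDecomp F V d) : Submodule F (Module.End F V) where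
  carrier := {X | IsTridiagonal X D₁ ∧ IsTridiagonal X D₂ ∧ IsTridiagonal X D₃}
  add_mem' := by
    rintro X Y ⟨hX1, hX2, hX3⟩ ⟨hY1, hY2, hY3⟩
    exact ⟨fun i v hv => by simpa using add_mem (hX1 i v hv) (hY1 i v hv),
           fun i v hv => by simpa using add_mem (hX2 i v hv) (hY2 i v hv),
           fun i v hv => by simpa using add_mem (hX3 i v hv) (hY3 i v hv)⟩
  zero_mem' :=
    ⟨fun i v _ => by simp,
     fun i v _ => by simp,
     fun i v _ => by simp⟩
  smul_mem' := by
    rintro c X ⟨hX1, hX2, hX3⟩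
    exact ⟨fun i v hv => by simpa using Submodule.smul_mem _ c (hX1 i v hv),
           fun i v hv => by simpa using Submodule.smul_mem _ c (hX2 i v hv),
           fun i v hv => by simpa using Submodule.smul_mem _ c (hX3 i v hv)⟩

/-- `E` is the idempotent sequence of the decomposition `D`: each `E i` acts as the
identity on `sub i` and as zero on `sub j` for `j ≠ i`. -/
def IsIdemSeq {d : ℕ} (D : LRDecomp F V d) (E : ℕ → Module.End F V) : Prop :=
  ∀ i, (∀ v ∈ D.sub i, E i v = v) ∧ ∀ j, j ≠ i → ∀ v ∈ D.sub j, E i v = 0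

/-- Bipartite: all trace data `a_i = tr(C E_i)`, `a'_i = tr(A E'_i)`, `a''_i = tr(B E''_i)`
vanish, where `E, E', E''` are the idempotent data of the triple `(A,B,C)`. -/
def IsBipartite (d : ℕ) (A B C : Module.End F V)
    (E E' E'' : ℕ → Module.End F V) : Prop :=
  ∀ i ≤ d, LinearMap.trace F V (C * E i) = 0 ∧
    LinearMap.trace F V (A * E' i) = 0 ∧ LinearMap.trace F V (B * E'' i) = 0

/-- An LR pair `(A,B)` has `q`-Weyl type. -/
def IsQWeylPair (q : F) (A B : Module.End F V) : Prop :=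
  q ≠ 0 ∧ q ^ 2 ≠ 1 ∧ q • (A * B) - q⁻¹ • (B * A) = (q - q⁻¹) • (1 : Module.End F V)

/-- An LR triple `(A,B,C)` has `q`-Weyl type. -/
def IsQWeylTriple (q : F) (A B C : Module.End F V) : Prop :=
  IsQWeylPair q A B ∧ IsQWeylPair q B C ∧ IsQWeylPair q C A

/-- `v` is an `(A,B)`-basis, relative to the `(A,B)`-decomposition `D`:
`v i ∈ sub i` is nonzero and `A v_i = v_{i-1}`. -/
def IsLRBasisFor {d : ℕ} (A : Module.End F V) (D : LRDecomp F V d) (v : ℕ → V) : Prop :=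
  (∀ i ≤ d, v i ∈ D.sub i ∧ v i ≠ 0) ∧ ∀ i, 1 ≤ i → i ≤ d → A (v i) = v (i - 1)

/-- `v` is a `(B,A)`-style basis relative to the `(A,B)`-decomposition `D` of the
reversed pair: `v i ∈ sub (d-i)` is nonzero and the lowering map sends `v i ↦ v (i-1)`.
(Used for `(C,B)`-bases relative to the `(B,C)`-decomposition, etc.) -/
def IsLRBasisRev {d : ℕ} (A : Module.End F V) (D : LRDecomp F V d) (v : ℕ → V) : Prop :=
  (∀ i ≤ d, v i ∈ D.sub (d - i) ∧ v i ≠ 0) ∧ ∀ i, 1 ≤ i → i ≤ d → A (v i) = v (i - 1)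

/-- The transition matrix from the basis `u` to the basis `w` is upper triangular
Toeplitz with parameters `α`: `w j = ∑_{i ≤ j} α_{j-i} u_i`. -/
def IsToeplitzTransition (d : ℕ) (u w : ℕ → V) (α : ℕ → F) : Prop :=
  ∀ j ≤ d, w j = ∑ i ∈ Finset.range (j + 1), α (j - i) • u i

/-- `φ` is the parameter sequence of the LR pair `(A,B)` with `(A,B)`-decomposition `D`:
`BA` acts on `V_i` as `φ i` for `1 ≤ i ≤ d`, with conventions `φ 0 = 0 = φ (d+1)`. -/
def IsParamSeq {d : ℕ} (A B : Module.End F V) (D : LRDecomp F V d) (φ : ℕ → F) : Prop :=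
  φ 0 = 0 ∧ φ (d + 1) = 0 ∧ ∀ i, 1 ≤ i → i ≤ d → ∀ v ∈ D.sub i, B (A v) = φ i • v


namespace LRAux

variable {d : ℕ}

def loF (D : LRDecomp F V d) (n : ℤ) : Submodule F V :=
  ⨆ j : {j : ℕ // (j : ℤ) ≤ n}, D.sub j

def hiF (D : LRDecomp F V d) (n : ℤ) : Submodule F V :=
  ⨆ j : {j : ℕ // n ≤ (j : ℤ)}, D.sub j

lemma mem_loF {D : LRDecomp F V d} {j : ℕ} {n : ℤ} (h : (j : ℤ) ≤ n) {v : V}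
    (hv : v ∈ D.sub j) : v ∈ loF D n :=
  Submodule.mem_iSup_of_mem (⟨j, h⟩ : {j : ℕ // (j : ℤ) ≤ n}) hv

lemma mem_hiF {D : LRDecomp F V d} {j : ℕ} {n : ℤ} (h : n ≤ (j : ℤ)) {v : V}
    (hv : v ∈ D.sub j) : v ∈ hiF D n :=
  Submodule.mem_iSup_of_mem (⟨j, h⟩ : {j : ℕ // n ≤ (j : ℤ)}) hv

lemma loF_le {D : LRDecomp F V d} {n : ℤ} {S : Submodule F V}
    (h : ∀ j : ℕ, (j : ℤ) ≤ n → D.sub j ≤ S) : loF D n ≤ S :=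
  iSup_le fun j => h j j.2

lemma hiF_le {D : LRDecomp F V d} {n : ℤ} {S : Submodule F V}
    (h : ∀ j : ℕ, n ≤ (j : ℤ) → D.sub j ≤ S) : hiF D n ≤ S :=
  iSup_le fun j => h j j.2

lemma sub_le_loF {D : LRDecomp F V d} {j : ℕ} {n : ℤ} (h : (j : ℤ) ≤ n) :
    D.sub j ≤ loF D n := fun _ hv => mem_loF h hv

lemma sub_le_hiF {D : LRDecomp F V d} {j : ℕ} {n : ℤ} (h : n ≤ (j : ℤ)) :
    D.sub j ≤ hiF D n := fun _ hv => mem_hiF h hv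

lemma loF_mono {D : LRDecomp F V d} {n m : ℤ} (h : n ≤ m) : loF D n ≤ loF D m :=
  loF_le fun j hj => sub_le_loF (hj.trans h)

lemma hiF_anti {D : LRDecomp F V d} {n m : ℤ} (h : m ≤ n) : hiF D n ≤ hiF D m :=
  hiF_le fun j hj => sub_le_hiF (h.trans hj)

lemma loF_top {D : LRDecomp F V d} {n : ℤ} (h : (d : ℤ) ≤ n) : loF D n = ⊤ := by
  rw [eq_top_iff, ← D.isInternal.submodule_iSup_eq_top]
  exact iSup_le fun i => sub_le_loF (by have := i.2; push_cast; omega)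

lemma hiF_top {D : LRDecomp F V d} {n : ℤ} (h : n ≤ 0) : hiF D n = ⊤ := by
  rw [eq_top_iff, ← D.isInternal.submodule_iSup_eq_top]
  exact iSup_le fun i => sub_le_hiF (by have := i.2; push_cast; omega)

lemma raises_map {B : Module.End F V} {D : LRDecomp F V d} (hR : Raises B D) (j : ℕ) :
    Submodule.map B (D.sub j) = D.sub (j + 1) := by
  rcases le_or_gt j d with h | h
  · exact hR j h
  · rw [D.eq_bot_of_gt j h, D.eq_bot_of_gt (j + 1) (by omega), Submodule.map_bot]

lemma lowers_map_le {A : Module.End F V} {D : LRDecomp F V d} (hL : Lowers A D) (j : ℕ) :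
    Submodule.map A (D.sub (j + 1)) ≤ D.sub j := by
  rcases lt_or_ge j d with h | h
  · exact (hL.2 j h).le
  · rw [D.eq_bot_of_gt (j + 1) (by omega), Submodule.map_bot]; exact bot_le

lemma raises_map_loF {B : Module.End F V} {D : LRDecomp F V d} (hR : Raises B D) (n : ℤ) :
    Submodule.map B (loF D n) ≤ loF D (n + 1) := by
  rw [loF, Submodule.map_iSup]
  exact iSup_le fun j => by
    rw [raises_map hR]; exact sub_le_loF (by push_cast; have := j.2; omega)

lemma raises_map_hiF {B : Module.End F V} {D : LRDecomp F V d} (hR : Raises B D) (n : ℤ) :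
    Submodule.map B (hiF D n) ≤ hiF D (n + 1) := by
  rw [hiF, Submodule.map_iSup]
  exact iSup_le fun j => by
    rw [raises_map hR]; exact sub_le_hiF (by push_cast; have := j.2; omega)

lemma raises_map_hiF_eq {B : Module.End F V} {D : LRDecomp F V d} (hR : Raises B D) {n : ℤ}
    (hn : 1 ≤ n) : Submodule.map B (hiF D (n - 1)) = hiF D n := by
  refine le_antisymm (by simpa using raises_map_hiF hR (n - 1)) (hiF_le fun j hj => ?_)
  have hj1 : 1 ≤ j := by omega
  have hjj : j = (j - 1) + 1 := by omega
  rw [hjj, ← raises_map hR (j - 1)]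
  exact Submodule.map_mono (sub_le_hiF (by push_cast [Nat.cast_sub hj1]; omega))

lemma lowers_map_loF_eq {A : Module.End F V} {D : LRDecomp F V d} (hL : Lowers A D) {n : ℤ}
    (hn : n ≤ (d : ℤ)) : Submodule.map A (loF D n) = loF D (n - 1) := by
  apply le_antisymm
  · rw [loF, Submodule.map_iSup]
    refine iSup_le fun j => ?_
    obtain ⟨j, hj⟩ := j
    match j with
    | 0 => rw [hL.1]; exact bot_le
    | (k + 1) =>
      have hk : k < d := by push_cast at hj; omega
      rw [hL.2 k hk]
      exact sub_le_loF (by push_cast at hj ⊢; omega)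
  · refine loF_le fun j hj => ?_
    have hjd : j < d := by omega
    rw [← hL.2 j hjd]
    exact Submodule.map_mono (sub_le_loF (by push_cast; omega))

lemma lowers_map_loF {A : Module.End F V} {D : LRDecomp F V d} (hL : Lowers A D) (n : ℤ) :
    Submodule.map A (loF D n) ≤ loF D (n - 1) := by
  rcases le_or_gt n (d : ℤ) with h | h
  · exact (lowers_map_loF_eq hL h).le
  · rw [loF_top (n := n - 1) (by omega)]; exact le_top

lemma lowers_map_hiF {A : Module.End F V} {D : LRDecomp F V d} (hL : Lowers A D) (n : ℤ) :
    Submodule.map A (hiF D n) ≤ hiF D (n - 1) := by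
  rw [hiF, Submodule.map_iSup]
  refine iSup_le fun j => ?_
  obtain ⟨j, hj⟩ := j
  match j with
  | 0 => rw [hL.1]; exact bot_le
  | (k + 1) =>
    refine (lowers_map_le hL k).trans (sub_le_hiF ?_)
    push_cast at hj ⊢; omega

lemma flagEq {B : Module.End F V} {D1 D2 : LRDecomp F V d}
    (hR : Raises B D1) (hL : Lowers B D2) (n : ℤ) : hiF D1 n = loF D2 ((d : ℤ) - n) := by
  rcases le_or_gt n 0 with h | h
  · rw [hiF_top h, loF_top (by omega)]
  · have H : ∀ m : ℤ, 0 ≤ m → hiF D1 m = loF D2 ((d : ℤ) - m) := by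
      refine Int.le_induction ?_ ?_
      · rw [hiF_top le_rfl, loF_top (by omega)]
      · intro m hm ih
        rw [← raises_map_hiF_eq hR (n := m + 1) (by omega)]
        have h' : m + 1 - 1 = m := by ring
        rw [h', ih, lowers_map_loF_eq hL (by omega)]
        ring_nf
    exact H n h.le

section Decompose

variable {D : LRDecomp F V d}

lemma decompose_loF_eq_zero [DirectSum.Decomposition (fun k : Fin (d + 1) => D.sub k.val)]
    {x : V} {n : ℤ} (hx : x ∈ loF D n) {k : Fin (d + 1)} (hk : n < (k.val : ℤ)) :
    (DirectSum.decompose (fun k : Fin (d + 1) => D.sub k.val) x k : V) = 0 := by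
  refine Submodule.iSup_induction
    (motive := fun y => (DirectSum.decompose (fun k : Fin (d + 1) => D.sub k.val) y k : V) = 0)
    (fun j : {j : ℕ // (j : ℤ) ≤ n} => D.sub j) hx ?_ (by simp) ?_
  · rintro ⟨j, hj⟩ y hy
    rcases le_or_gt j d with hjd | hjd
    · have hne : (⟨j, by omega⟩ : Fin (d + 1)) ≠ k := by
        intro hcontra
        have : ((⟨j, by omega⟩ : Fin (d + 1)) : ℕ) = k.val := by rw [hcontra]
        simp at this; omega
      exact DirectSum.decompose_of_mem_ne (fun k : Fin (d + 1) => D.sub k.val) (by exact hy) hne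
    · have hy' : y ∈ D.sub j := hy
      rw [D.eq_bot_of_gt j hjd] at hy'
      simp only [Submodule.mem_bot] at hy'
      rw [hy']; simp
  · intro y z hy hz
    rw [DirectSum.decompose_add, DirectSum.add_apply, Submodule.coe_add, hy, hz, add_zero]

lemma decompose_hiF_eq_zero [DirectSum.Decomposition (fun k : Fin (d + 1) => D.sub k.val)]
    {x : V} {n : ℤ} (hx : x ∈ hiF D n) {k : Fin (d + 1)} (hk : (k.val : ℤ) < n) :
    (DirectSum.decompose (fun k : Fin (d + 1) => D.sub k.val) x k : V) = 0 := by
  refine Submodule.iSup_induction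
    (motive := fun y => (DirectSum.decompose (fun k : Fin (d + 1) => D.sub k.val) y k : V) = 0)
    (fun j : {j : ℕ // n ≤ (j : ℤ)} => D.sub j) hx ?_ (by simp) ?_
  · rintro ⟨j, hj⟩ y hy
    rcases le_or_gt j d with hjd | hjd
    · have hne : (⟨j, by omega⟩ : Fin (d + 1)) ≠ k := by
        intro hcontra
        have : ((⟨j, by omega⟩ : Fin (d + 1)) : ℕ) = k.val := by rw [hcontra]
        simp at this; omega
      exact DirectSum.decompose_of_mem_ne (fun k : Fin (d + 1) => D.sub k.val) (by exact hy) hne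
    · have hy' : y ∈ D.sub j := hy
      rw [D.eq_bot_of_gt j hjd] at hy'
      simp only [Submodule.mem_bot] at hy'
      rw [hy']; simp
  · intro y z hy hz
    rw [DirectSum.decompose_add, DirectSum.add_apply, Submodule.coe_add, hy, hz, add_zero]

lemma loF_inf_hiF (D : LRDecomp F V d) (i : ℕ) {x : V}
    (h1 : x ∈ loF D ((i : ℤ) + 1)) (h2 : x ∈ hiF D ((i : ℤ) - 1)) :
    x ∈ D.sub (i - 1) ⊔ D.sub i ⊔ D.sub (i + 1) := by
  classical
  letI := D.isInternal.chooseDecomposition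
  set ℳ : Fin (d + 1) → Submodule F V := fun k => D.sub k.val with hℳ
  have h0 := DirectSum.sum_support_decompose ℳ x
  have hsum : ∑ k : Fin (d + 1), (DirectSum.decompose ℳ x k : V) = x := by
    conv_rhs => rw [← h0]
    refine (Finset.sum_subset (Finset.subset_univ _) fun k _ hk => ?_).symm
    rw [DFinsupp.notMem_support_iff.mp hk]; simp
  rw [← hsum]
  refine Submodule.sum_mem _ fun k _ => ?_
  rcases lt_or_ge ((i : ℤ) + 1) (k.val : ℤ) with hk | hk
  · rw [decompose_loF_eq_zero h1 hk]; exact zero_mem _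
  rcases lt_or_ge ((k.val : ℤ)) ((i : ℤ) - 1) with hk' | hk'
  · rw [decompose_hiF_eq_zero h2 hk']; exact zero_mem _
  have hmem : (DirectSum.decompose ℳ x k : V) ∈ D.sub k.val := (DirectSum.decompose ℳ x k).2
  have : k.val = i - 1 ∨ k.val = i ∨ k.val = i + 1 := by omega
  rcases this with h | h | h
  · exact Submodule.mem_sup_left (Submodule.mem_sup_left (h ▸ hmem))
  · exact Submodule.mem_sup_left (Submodule.mem_sup_right (h ▸ hmem))
  · exact Submodule.mem_sup_right (h ▸ hmem)

end Decompose

def Flags (D : LRDecomp F V d) (X : Module.End F V) (a b : ℤ) : Prop :=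
  (∀ n : ℤ, Submodule.map X (loF D n) ≤ loF D (n + a)) ∧
  (∀ n : ℤ, Submodule.map X (hiF D n) ≤ hiF D (n + b))

lemma Flags.mul {D : LRDecomp F V d} {X Y : Module.End F V} {a b a' b' : ℤ}
    (hX : Flags D X a b) (hY : Flags D Y a' b') : Flags D (X * Y) (a' + a) (b' + b) := by
  constructor <;> intro n
  · rw [Module.End.mul_eq_comp, Submodule.map_comp]
    refine ((Submodule.map_mono (hY.1 n)).trans (hX.1 (n + a'))).trans (loF_mono (by ring_nf; omega))
  · rw [Module.End.mul_eq_comp, Submodule.map_comp]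
    refine ((Submodule.map_mono (hY.2 n)).trans (hX.2 (n + b'))).trans (hiF_anti (by ring_nf; omega))

lemma Flags.weaken {D : LRDecomp F V d} {X : Module.End F V} {a b a' b' : ℤ}
    (h : Flags D X a b) (ha : a ≤ a') (hb : b' ≤ b) : Flags D X a' b' :=
  ⟨fun n => (h.1 n).trans (loF_mono (by omega)),
   fun n => (h.2 n).trans (hiF_anti (by omega))⟩

lemma flags_one (D : LRDecomp F V d) : Flags D (1 : Module.End F V) 0 0 := by
  constructor <;> intro n <;> simp [Module.End.one_eq_id, Submodule.map_id]

lemma Flags.isTridiagonal {D : LRDecomp F V d} {X : Module.End F V}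
    (h : Flags D X 1 (-1)) : IsTridiagonal X D := by
  intro i v hv
  have h1 : X v ∈ loF D ((i : ℤ) + 1) := h.1 i (Submodule.mem_map_of_mem (mem_loF le_rfl hv))
  have h2 : X v ∈ hiF D ((i : ℤ) + (-1)) := h.2 i (Submodule.mem_map_of_mem (mem_hiF le_rfl hv))
  exact loF_inf_hiF D i h1 (by rwa [show (i : ℤ) - 1 = (i : ℤ) + (-1) by ring])

lemma tridiag3 {D : LRDecomp F V d} {X Y Z : Module.End F V} {aX bX aY bY aZ bZ : ℤ}
    (hX : Flags D X aX bX) (hY : Flags D Y aY bY) (hZ : Flags D Z aZ bZ)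
    (ha : aZ + (aY + aX) ≤ 1) (hb : (-1 : ℤ) ≤ bZ + (bY + bX)) :
    IsTridiagonal (X * Y * Z) D :=
  (((hX.mul hY).mul hZ).weaken ha hb).isTridiagonal

lemma tridiag1 {D : LRDecomp F V d} {X : Module.End F V} {a b : ℤ}
    (hX : Flags D X a b) (ha : a ≤ 1) (hb : (-1 : ℤ) ≤ b) : IsTridiagonal X D :=
  (hX.weaken ha hb).isTridiagonal

lemma flags_of_pairs {A B C : Module.End F V} {D1 D2 D3 : LRDecomp F V d}
    (h1 : IsLRPairWith A B D1) (h2 : IsLRPairWith B C D2) (h3 : IsLRPairWith C A D3) :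
    Flags D1 A (-1) (-1) ∧ Flags D1 B 1 1 ∧ Flags D1 C 1 (-1) := by
  have eAB : ∀ n : ℤ, hiF D1 n = loF D2 ((d : ℤ) - n) := flagEq h1.2 h2.1
  have eCA : ∀ n : ℤ, hiF D3 n = loF D1 ((d : ℤ) - n) := flagEq h3.2 h1.1
  have eCA' : ∀ n : ℤ, loF D1 n = hiF D3 ((d : ℤ) - n) := by
    intro n
    rw [eCA ((d : ℤ) - n), show (d : ℤ) - ((d : ℤ) - n) = n by ring]
  refine ⟨⟨fun n => ?_, fun n => ?_⟩, ⟨fun n => ?_, fun n => ?_⟩, ⟨fun n => ?_, fun n => ?_⟩⟩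
  · simpa [sub_eq_add_neg] using lowers_map_loF h1.1 n
  · simpa [sub_eq_add_neg] using lowers_map_hiF h1.1 n
  · exact raises_map_loF h1.2 n
  · exact raises_map_hiF h1.2 n
  · rw [eCA' n, eCA' (n + 1)]
    refine (lowers_map_hiF h3.1 ((d : ℤ) - n)).trans (hiF_anti (by ring_nf; omega))
  · rw [eAB n, eAB (n + (-1))]
    refine (raises_map_loF h2.2 ((d : ℤ) - n)).trans (loF_mono (by ring_nf; omega))

end LRAux

theorem stmt6
    {F : Type*} [Field F] {V : Type*} [AddCommGroup V] [Module F V]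
    [FiniteDimensional F V] {d : ℕ} (hdim : Module.finrank F V = d + 1)
    (A B C : Module.End F V) (DAB DBC DCA : LRDecomp F V d)
    (hAB : IsLRPairWith A B DAB) (hBC : IsLRPairWith B C DBC) (hCA : IsLRPairWith C A DCA) :
    (1 : Module.End F V) ∈ tridiagSpace DAB DBC DCA ∧ A ∈ tridiagSpace DAB DBC DCA ∧ B ∈ tridiagSpace DAB DBC DCA ∧ C ∈ tridiagSpace DAB DBC DCA ∧
    A * B * C ∈ tridiagSpace DAB DBC DCA ∧ B * C * A ∈ tridiagSpace DAB DBC DCA ∧ C * A * B ∈ tridiagSpace DAB DBC DCA ∧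
    A * C * B ∈ tridiagSpace DAB DBC DCA ∧ C * B * A ∈ tridiagSpace DAB DBC DCA ∧ B * A * C ∈ tridiagSpace DAB DBC DCA := by
  obtain ⟨fA1, fB1, fC1⟩ := LRAux.flags_of_pairs hAB hBC hCA
  obtain ⟨fB2, fC2, fA2⟩ := LRAux.flags_of_pairs hBC hCA hAB
  obtain ⟨fC3, fA3, fB3⟩ := LRAux.flags_of_pairs hCA hAB hBC
  have memT : ∀ X : Module.End F V, IsTridiagonal X DAB → IsTridiagonal X DBC →
      IsTridiagonal X DCA → X ∈ tridiagSpace DAB DBC DCA := fun X h1 h2 h3 => ⟨h1, h2, h3⟩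
  refine ⟨?_, ?_, ?_, ?_, ?_, ?_, ?_, ?_, ?_, ?_⟩
  · exact memT 1 (LRAux.tridiag1 (LRAux.flags_one DAB) (by norm_num) (by norm_num))
      (LRAux.tridiag1 (LRAux.flags_one DBC) (by norm_num) (by norm_num))
      (LRAux.tridiag1 (LRAux.flags_one DCA) (by norm_num) (by norm_num))
  · exact memT A (LRAux.tridiag1 fA1 (by norm_num) (by norm_num))
      (LRAux.tridiag1 fA2 (by norm_num) (by norm_num))
      (LRAux.tridiag1 fA3 (by norm_num) (by norm_num))
  · exact memT B (LRAux.tridiag1 fB1 (by norm_num) (by norm_num))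
      (LRAux.tridiag1 fB2 (by norm_num) (by norm_num))
      (LRAux.tridiag1 fB3 (by norm_num) (by norm_num))
  · exact memT C (LRAux.tridiag1 fC1 (by norm_num) (by norm_num))
      (LRAux.tridiag1 fC2 (by norm_num) (by norm_num))
      (LRAux.tridiag1 fC3 (by norm_num) (by norm_num))
  · exact memT (A * B * C) (LRAux.tridiag3 fA1 fB1 fC1 (by norm_num) (by norm_num))
      (LRAux.tridiag3 fA2 fB2 fC2 (by norm_num) (by norm_num))
      (LRAux.tridiag3 fA3 fB3 fC3 (by norm_num) (by norm_num))
  · exact memT (B * C * A) (LRAux.tridiag3 fB1 fC1 fA1 (by norm_num) (by norm_num))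
      (LRAux.tridiag3 fB2 fC2 fA2 (by norm_num) (by norm_num))
      (LRAux.tridiag3 fB3 fC3 fA3 (by norm_num) (by norm_num))
  · exact memT (C * A * B) (LRAux.tridiag3 fC1 fA1 fB1 (by norm_num) (by norm_num))
      (LRAux.tridiag3 fC2 fA2 fB2 (by norm_num) (by norm_num))
      (LRAux.tridiag3 fC3 fA3 fB3 (by norm_num) (by norm_num))
  · exact memT (A * C * B) (LRAux.tridiag3 fA1 fC1 fB1 (by norm_num) (by norm_num))
      (LRAux.tridiag3 fA2 fC2 fB2 (by norm_num) (by norm_num))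
      (LRAux.tridiag3 fA3 fC3 fB3 (by norm_num) (by norm_num))
  · exact memT (C * B * A) (LRAux.tridiag3 fC1 fB1 fA1 (by norm_num) (by norm_num))
      (LRAux.tridiag3 fC2 fB2 fA2 (by norm_num) (by norm_num))
      (LRAux.tridiag3 fC3 fB3 fA3 (by norm_num) (by norm_num))
  · exact memT (B * A * C) (LRAux.tridiag3 fB1 fA1 fC1 (by norm_num) (by norm_num))
      (LRAux.tridiag3 fB2 fA2 fC2 (by norm_num) (by norm_num))
      (LRAux.tridiag3 fB3 fA3 fC3 (by norm_num) (by norm_num))
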